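/- arXiv:0809.3110 — 3 statements merged into one kernel-verified Lean document; each statement's English description precedes it below -/
import Mathlib

section
/- For words g₁, g₂ in H = F/F₃: ν(g₁ α g₂ α⁻¹) = b(g₂) + ν(g₁g₂) and ν(g₁ β g₂ β⁻¹) = -a(g₂) + ν(g₁g₂). -/
/-! Common setup: free group on two generators, Heisenberg group of unipotent
upper-triangular 3×3 integer matrices, the Heisenberg invariant. -/

noncomputable section

open scoped commutatorElement

/-- The free group on two generators. -/
abbrev F : Type := FreeGroup Bool

/-- The generator `α` of the free group. -/
def Wα : F := FreeGroup.of false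

/-- The generator `β` of the free group. -/
def Wβ : F := FreeGroup.of true

/-- `F₃`, the third term of the lower central series `F₁ = F`, `F_{n+1} = [F, Fₙ]`
(Mathlib's `lowerCentralSeries` is 0-indexed). -/
abbrev F₃ : Subgroup F := (⊤ : Subgroup F).lowerCentralSeries 2

/-- `H = F/F₃`. -/
abbrev H : Type := F ⧸ F₃

/-- The unipotent upper-triangular matrix `M(a,b,c)`. -/
def Mmat (a b c : ℤ) : Matrix (Fin 3) (Fin 3) ℤ := !![1, a, c; 0, 1, b; 0, 0, 1]

theorem Mmat_mul (a b c a' b' c' : ℤ) :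
    Mmat a b c * Mmat a' b' c' = Mmat (a + a') (b + b') (c + c' + a * b') := by
  simp [Mmat, Matrix.mul_fin_three]; ring_nf <;> simp

theorem Mmat_zero : Mmat 0 0 0 = 1 := by
  simp [Mmat, Matrix.one_fin_three]

/-- `M(a,b,c)` as a unit of the matrix ring. -/
def Munit (a b c : ℤ) : (Matrix (Fin 3) (Fin 3) ℤ)ˣ :=
  ⟨Mmat a b c, Mmat (-a) (-b) (a * b - c),
    by rw [Mmat_mul]; rw [show a + -a = 0 by ring, show b + -b = 0 by ring,
      show c + (a*b - c) + a * (-b) = 0 by ring]; exact Mmat_zero,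
    by rw [Mmat_mul]; rw [show -a + a = 0 by ring, show -b + b = 0 by ring,
      show (a*b - c) + c + (-a) * b = 0 by ring]; exact Mmat_zero⟩

theorem Munit_mul (a b c a' b' c' : ℤ) :
    Munit a b c * Munit a' b' c' = Munit (a + a') (b + b') (c + c' + a * b') :=
  Units.ext (Mmat_mul a b c a' b' c')

theorem Munit_one : Munit 0 0 0 = 1 := Units.ext Mmat_zero

theorem Munit_inv (a b c : ℤ) : (Munit a b c)⁻¹ = Munit (-a) (-b) (a * b - c) :=
  Units.ext rfl

theorem Munit_congr {a b c a' b' c' : ℤ} (h1 : a = a') (h2 : b = b') (h3 : c = c') :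
    Munit a b c = Munit a' b' c' := by subst h1; subst h2; subst h3; rfl

/-- The integer Heisenberg group, as the subgroup of units of the `3×3` integer
matrix ring consisting of the unipotent upper-triangular matrices `M(a,b,c)`. -/
def Heis : Subgroup (Matrix (Fin 3) (Fin 3) ℤ)ˣ where
  carrier := {x | ∃ a b c : ℤ, x = Munit a b c}
  one_mem' := ⟨0, 0, 0, Munit_one.symm⟩
  mul_mem' := by
    rintro x y ⟨a, b, c, rfl⟩ ⟨a', b', c', rfl⟩
    exact ⟨_, _, _, Munit_mul a b c a' b' c'⟩
  inv_mem' := by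
    rintro x ⟨a, b, c, rfl⟩
    exact ⟨_, _, _, Munit_inv a b c⟩

/-- The homomorphism `Ψ : F → ℍ` with `Ψ(α) = M(1,0,0)` and `Ψ(β) = M(0,1,0)`. -/
def Ψ : F →* (Matrix (Fin 3) (Fin 3) ℤ)ˣ :=
  FreeGroup.lift fun x => if x then Munit 0 1 0 else Munit 1 0 0

theorem Ψ_mem (g : F) : Ψ g ∈ Heis := by
  induction g using FreeGroup.induction_on with
  | C1 => exact Heis.one_mem
  | of x => cases x <;> · show Ψ (FreeGroup.of _) ∈ Heis; rw [Ψ, FreeGroup.lift_apply_of]; exact ⟨_, _, _, rfl⟩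
  | inv_of x hx => rw [map_inv]; exact Heis.inv_mem hx
  | mul x y hx hy => rw [map_mul]; exact Heis.mul_mem hx hy

theorem Munit_commutator (a b c a' b' c' : ℤ) :
    ⁅Munit a b c, Munit a' b' c'⁆ = Munit 0 0 (a * b' - a' * b) := by
  rw [commutatorElement_def, Munit_inv, Munit_inv, Munit_mul, Munit_mul, Munit_mul]
  exact Munit_congr (by ring) (by ring) (by ring)

theorem Munit_central (z a b c : ℤ) : Munit 0 0 z * Munit a b c = Munit a b c * Munit 0 0 z := by
  rw [Munit_mul, Munit_mul]; exact Munit_congr (by ring) (by ring) (by ring)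

theorem Heis_comm_central (g : F) (hg : g ∈ (⁅(⊤ : Subgroup F), ⊤⁆ : Subgroup F)) :
    Ψ g ∈ Subgroup.centralizer (Heis : Set (Matrix (Fin 3) (Fin 3) ℤ)ˣ) := by
  have hle : (⁅(⊤ : Subgroup F), ⊤⁆ : Subgroup F) ≤
      Subgroup.comap Ψ (Subgroup.centralizer (Heis : Set (Matrix (Fin 3) (Fin 3) ℤ)ˣ)) := by
    rw [Subgroup.commutator_le]
    intro g₁ _ g₂ _
    rw [Subgroup.mem_comap, map_commutatorElement]
    obtain ⟨a, b, c, h1⟩ := Ψ_mem g₁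
    obtain ⟨a', b', c', h2⟩ := Ψ_mem g₂
    rw [h1, h2, Munit_commutator]
    rw [Subgroup.mem_centralizer_iff]
    rintro x ⟨p, q, r, rfl⟩
    exact (Munit_central _ _ _ _).symm
  exact hle hg

theorem F₃_le_ker : F₃ ≤ Ψ.ker := by
  show ⁅(⁅(⊤ : Subgroup F), ⊤⁆ : Subgroup F), ⊤⁆ ≤ Ψ.ker
  rw [Subgroup.commutator_le]
  intro g hg h _
  rw [MonoidHom.mem_ker, map_commutatorElement]
  have hc : Ψ h * Ψ g = Ψ g * Ψ h :=
    Subgroup.mem_centralizer_iff.mp (Heis_comm_central g hg) (Ψ h) (Ψ_mem h)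
  rw [commutatorElement_def, ← hc]
  group

/-- The induced homomorphism `ψ : H = F/F₃ → ℍ`. -/
def ψH : H →* Heis :=
  QuotientGroup.lift F₃ (Ψ.codRestrict Heis Ψ_mem)
    (fun g hg => by
      have : Ψ g = 1 := F₃_le_ker hg
      exact Subtype.ext (by simpa using this))

/-- The matrix of the image of `g ∈ H` in the Heisenberg group. -/
def mat (g : H) : Matrix (Fin 3) (Fin 3) ℤ := ((ψH g : (Matrix (Fin 3) (Fin 3) ℤ)ˣ) : Matrix (Fin 3) (Fin 3) ℤ)

/-- `a(g)`: the exponent sum of `α` in `g` (the `(0,1)` entry of the Heisenberg matrix). -/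
def aH (g : H) : ℤ := mat g 0 1

/-- `b(g)`: the exponent sum of `β` in `g` (the `(1,2)` entry of the Heisenberg matrix). -/
def bH (g : H) : ℤ := mat g 1 2

/-- The Heisenberg invariant `ν(g)` of `g ∈ H`: the exponent of the central element
`[α,β]` in the unique normal form `g = [α,β]^ν α^a β^b`. -/
def νH (g : H) : ℤ := mat g 0 2 - aH g * bH g

/-- `a(g)` for a word `g` in the free group. -/
def aF (g : F) : ℤ := aH (QuotientGroup.mk g)

/-- `b(g)` for a word `g` in the free group. -/
def bF (g : F) : ℤ := bH (QuotientGroup.mk g)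

/-- The Heisenberg invariant of a word in the free group: the Heisenberg invariant of its
image in `H = F/F₃`. -/
def νF (g : F) : ℤ := νH (QuotientGroup.mk g)

theorem exists_munit (g : H) : ∃ a b c : ℤ, (ψH g : (Matrix (Fin 3) (Fin 3) ℤ)ˣ) = Munit a b c :=
  (ψH g).2

theorem aH_eq (g : H) {a b c : ℤ} (h : (ψH g : (Matrix (Fin 3) (Fin 3) ℤ)ˣ) = Munit a b c) :
    aH g = a := by simp [aH, mat, h, Munit, Mmat]

theorem bH_eq (g : H) {a b c : ℤ} (h : (ψH g : (Matrix (Fin 3) (Fin 3) ℤ)ˣ) = Munit a b c) :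
    bH g = b := by simp [bH, mat, h, Munit, Mmat]

theorem νH_eq (g : H) {a b c : ℤ} (h : (ψH g : (Matrix (Fin 3) (Fin 3) ℤ)ˣ) = Munit a b c) :
    νH g = c - a * b := by
  rw [νH, aH_eq g h, bH_eq g h]; simp [mat, h, Munit, Mmat]

theorem ψH_mk (g : F) : ((ψH (QuotientGroup.mk g) : Heis) : (Matrix (Fin 3) (Fin 3) ℤ)ˣ) = Ψ g := rfl

theorem ψH_Wα : ((ψH (QuotientGroup.mk Wα) : Heis) : (Matrix (Fin 3) (Fin 3) ℤ)ˣ) = Munit 1 0 0 := by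
  rw [ψH_mk, Wα, Ψ, FreeGroup.lift_apply_of]; simp

theorem ψH_Wβ : ((ψH (QuotientGroup.mk Wβ) : Heis) : (Matrix (Fin 3) (Fin 3) ℤ)ˣ) = Munit 0 1 0 := by
  rw [ψH_mk, Wβ, Ψ, FreeGroup.lift_apply_of]; simp

/-- for `g₁, g₂ ∈ H = F/F₃`:
`ν(g₁ α g₂ α⁻¹) = b(g₂) + ν(g₁g₂)` and `ν(g₁ β g₂ β⁻¹) = -a(g₂) + ν(g₁g₂)`. -/
theorem statement_10 (g₁ g₂ : H) :
    νH (g₁ * (QuotientGroup.mk Wα : H) * g₂ * (QuotientGroup.mk Wα : H)⁻¹) =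
      bH g₂ + νH (g₁ * g₂) ∧
    νH (g₁ * (QuotientGroup.mk Wβ : H) * g₂ * (QuotientGroup.mk Wβ : H)⁻¹) =
      -(aH g₂) + νH (g₁ * g₂) := by
  obtain ⟨a1, b1, c1, h1⟩ := exists_munit g₁
  obtain ⟨a2, b2, c2, h2⟩ := exists_munit g₂
  have hα : ((ψH (g₁ * (QuotientGroup.mk Wα : H) * g₂ * (QuotientGroup.mk Wα : H)⁻¹) : Heis) :
      (Matrix (Fin 3) (Fin 3) ℤ)ˣ) =
      Munit a1 b1 c1 * Munit 1 0 0 * Munit a2 b2 c2 * (Munit 1 0 0)⁻¹ := by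
    push_cast [map_mul, map_inv, h1, h2, ψH_Wα]; rfl
  have hβ : ((ψH (g₁ * (QuotientGroup.mk Wβ : H) * g₂ * (QuotientGroup.mk Wβ : H)⁻¹) : Heis) :
      (Matrix (Fin 3) (Fin 3) ℤ)ˣ) =
      Munit a1 b1 c1 * Munit 0 1 0 * Munit a2 b2 c2 * (Munit 0 1 0)⁻¹ := by
    push_cast [map_mul, map_inv, h1, h2, ψH_Wβ]; rfl
  rw [Munit_inv, Munit_mul, Munit_mul, Munit_mul] at hα hβ
  have hm : ((ψH (g₁ * g₂) : Heis) : (Matrix (Fin 3) (Fin 3) ℤ)ˣ) = Munit (a1+a2) (b1+b2) (c1+c2+a1*b2) := by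
    push_cast [map_mul, h1, h2, Munit_mul]; rfl
  rw [νH_eq _ hα, νH_eq _ hβ, νH_eq _ hm, bH_eq _ h2, aH_eq _ h2]
  constructor <;> ring

end
end

section
/- Let g = l₁l₂⋯l_n be a word in the letters α, α⁻¹, β, β⁻¹ and let w(0,i) denote the prefix l₁⋯l_{i-1}. Then the Heisenberg invariant of g equals Σ_{i : l_i = α⁻¹} b(w(0,i)) − Σ_{j : l_j = α} b(w(0,j)), where b(w) is the exponent sum of β in w. -/
/-! Common setup: free group on two generators, Heisenberg group of unipotent
upper-triangular 3×3 integer matrices, the Heisenberg invariant. -/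

noncomputable section

open scoped commutatorElement

/-! Words in the letters α, α⁻¹, β, β⁻¹ and foldings (RNA secondary structures). -/

/-- A letter is a pair `(x, s)` (the `FreeGroup` convention): `s = true` for a generator,
`s = false` for its inverse. -/
abbrev Letter : Type := Bool × Bool

/-- A word in the letters `α`, `α⁻¹`, `β`, `β⁻¹`. -/
abbrev Word : Type := List Letter

/-- The letter `α`. -/
def lα : Letter := (false, true)
/-- The letter `α⁻¹`. -/
def lαinv : Letter := (false, false)
/-- The letter `β`. -/
def lβ : Letter := (true, true)
/-- The letter `β⁻¹`. -/
def lβinv : Letter := (true, false)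

/-- The exponent sum of `α` in a word: #`α` − #`α⁻¹`. -/
def aw (w : Word) : ℤ := (w.count lα : ℤ) - (w.count lαinv : ℤ)

/-- The exponent sum of `β` in a word: #`β` − #`β⁻¹`. -/
def bw (w : Word) : ℤ := (w.count lβ : ℤ) - (w.count lβinv : ℤ)

/-- The cyclic subword `w(i,j)` strictly between positions `i` and `j` (`0`-indexed),
read counterclockwise: if `i < j` it is `l_{i+1} ⋯ l_{j-1}`, and if `i > j` it is
`l_{i+1} ⋯ l_n l_1 ⋯ l_{j-1}` (0-indexed: wraps around the end). -/
def between (w : Word) (i j : ℕ) : Word :=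
  if i < j then (w.drop (i + 1)).take (j - i - 1) else w.drop (i + 1) ++ w.take j

/-- A folding (RNA secondary structure without pseudo-knots) of the cyclic word `w`:
a collection of disjoint pairs `(i,j)` of positions with `l_i ∈ {α, β}` and `l_j` the
inverse letter, subject to the non-nesting (no pseudo-knot) condition. -/
structure Folding (w : Word) where
  /-- The set of paired positions. -/
  pairs : Finset (Fin w.length × Fin w.length)
  ne : ∀ p ∈ pairs, p.1 ≠ p.2
  matched : ∀ p ∈ pairs,
    (w.get p.1 = lα ∧ w.get p.2 = lαinv) ∨ (w.get p.1 = lβ ∧ w.get p.2 = lβinv)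
  disjoint : ∀ p ∈ pairs, ∀ q ∈ pairs, p ≠ q →
    p.1 ≠ q.1 ∧ p.1 ≠ q.2 ∧ p.2 ≠ q.1 ∧ p.2 ≠ q.2
  nonnested : ∀ p ∈ pairs, ∀ q ∈ pairs,
    (p.1 < q.1 ∧ q.1 < p.2 → p.1 < q.2 ∧ q.2 < p.2) ∧
    (p.2 < q.1 ∧ q.1 < p.1 → p.2 < q.2 ∧ q.2 < p.1)

/-- A complete `α`-folding: every pair is an `α`-pair and every occurrence of the
letter `α` is paired. -/
def Folding.IsCompleteAlpha {w : Word} (𝓕 : Folding w) : Prop :=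
  (∀ p ∈ 𝓕.pairs, w.get p.1 = lα) ∧
    ∀ i : Fin w.length, w.get i = lα → ∃ p ∈ 𝓕.pairs, p.1 = i

/-! Auxiliary development for Statement 11. -/

/-- The `α`-exponent of a single letter. -/
def εa (l : Letter) : ℤ := if l.1 then 0 else (if l.2 then 1 else -1)

/-- The `β`-exponent of a single letter. -/
def εb (l : Letter) : ℤ := if l.1 then (if l.2 then 1 else -1) else 0

theorem aw_nil : aw [] = 0 := by simp [aw]

theorem bw_nil : bw [] = 0 := by simp [bw]

theorem aw_cons (l : Letter) (t : Word) : aw (l :: t) = εa l + aw t := by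
  rcases l with ⟨x, s⟩
  cases x <;> cases s <;>
    simp [aw, εa, lα, lαinv, lβ, lβinv, List.count_cons] <;> push_cast <;> ring

theorem bw_cons (l : Letter) (t : Word) : bw (l :: t) = εb l + bw t := by
  rcases l with ⟨x, s⟩
  cases x <;> cases s <;>
    simp [bw, εb, lα, lαinv, lβ, lβinv, List.count_cons] <;> push_cast <;> ring

/-- The `(0,2)`-entry accumulator along a word, from the left. -/
def cw : Word → ℤ
  | [] => 0
  | l :: t => cw t + εa l * bw t

theorem Ψ_mk_single (l : Letter) : Ψ (FreeGroup.mk [l]) = Munit (εa l) (εb l) 0 := by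
  rcases l with ⟨x, s⟩
  cases s
  · have h : FreeGroup.mk [(x, false)] = (FreeGroup.of x)⁻¹ := by
      rw [FreeGroup.of, FreeGroup.inv_mk]; rfl
    rw [h, map_inv]
    show (FreeGroup.lift _ (FreeGroup.of x))⁻¹ = _
    rw [FreeGroup.lift_apply_of]
    cases x <;> simp [εa, εb, Munit_inv]
  · show FreeGroup.lift _ (FreeGroup.of x) = _
    rw [FreeGroup.lift_apply_of]
    cases x <;> simp [εa, εb]

theorem Ψ_mk (w : Word) : Ψ (FreeGroup.mk w) = Munit (aw w) (bw w) (cw w) := by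
  induction w with
  | nil =>
    have : FreeGroup.mk ([] : Word) = 1 := rfl
    rw [this, map_one, aw_nil, bw_nil, cw]
    exact Munit_one.symm
  | cons l t ih =>
    have h : FreeGroup.mk (l :: t) = FreeGroup.mk [l] * FreeGroup.mk t := rfl
    rw [h, map_mul, Ψ_mk_single, ih, Munit_mul, aw_cons, bw_cons, cw]
    exact Munit_congr rfl rfl (by ring)

theorem mat_mk (g : F) : mat (QuotientGroup.mk g) = ((Ψ g : (Matrix (Fin 3) (Fin 3) ℤ)ˣ) : Matrix (Fin 3) (Fin 3) ℤ) := by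
  rfl

theorem Mmat_01 (a b c : ℤ) : Mmat a b c 0 1 = a := by simp [Mmat]
theorem Mmat_12 (a b c : ℤ) : Mmat a b c 1 2 = b := by simp [Mmat]
theorem Mmat_02 (a b c : ℤ) : Mmat a b c 0 2 = c := by simp [Mmat]

theorem νF_mk (w : Word) : νF (FreeGroup.mk w) = cw w - aw w * bw w := by
  unfold νF νH aH bH
  rw [mat_mk, Ψ_mk]
  show Mmat (aw w) (bw w) (cw w) 0 2 - Mmat (aw w) (bw w) (cw w) 0 1 *
      Mmat (aw w) (bw w) (cw w) 1 2 = _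
  rw [Mmat_01, Mmat_12, Mmat_02]

theorem sum_indicator (t : Word) :
    ∑ i : Fin t.length, ((if t.get i = lαinv then (1:ℤ) else 0) -
      (if t.get i = lα then (1:ℤ) else 0)) = -aw t := by
  induction t with
  | nil => simp [aw_nil]
  | cons l t ih =>
    simp only [List.length_cons]
    rw [Fin.sum_univ_succ]
    simp only [List.get_eq_getElem, Fin.val_succ, List.getElem_cons_succ, Fin.val_zero,
      List.getElem_cons_zero]
    simp only [List.get_eq_getElem] at ih
    rw [ih, aw_cons]
    rcases l with ⟨x, s⟩
    cases x <;> cases s <;> simp [εa, lα, lαinv] <;> ring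

theorem core (w : Word) :
    cw w - aw w * bw w =
      ∑ i : Fin w.length, ((if w.get i = lαinv then bw (w.take (i : ℕ)) else 0) -
        (if w.get i = lα then bw (w.take (i : ℕ)) else 0)) := by
  induction w with
  | nil => simp [cw, aw_nil, bw_nil]
  | cons l t ih =>
    simp only [List.length_cons]
    rw [Fin.sum_univ_succ]
    have hterm : ∀ i : Fin t.length,
        ((if (l :: t).get i.succ = lαinv then bw ((l :: t).take ((i.succ : ℕ))) else 0) -
          (if (l :: t).get i.succ = lα then bw ((l :: t).take ((i.succ : ℕ))) else 0)) =
        ((if t.get i = lαinv then bw (t.take (i : ℕ)) else 0) -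
          (if t.get i = lα then bw (t.take (i : ℕ)) else 0)) +
        εb l * ((if t.get i = lαinv then (1:ℤ) else 0) - (if t.get i = lα then (1:ℤ) else 0)) := by
      intro i
      have h1 : (l :: t).get i.succ = t.get i := by
        simp [List.get_eq_getElem, Fin.val_succ]
      have h2 : (l :: t).take ((i.succ : ℕ)) = l :: t.take (i : ℕ) := by
        rw [Fin.val_succ, List.take_succ_cons]
      rw [h1, h2, bw_cons]
      by_cases hα : t.get i = lα
      · have hne : ¬ t.get i = lαinv := by rw [hα]; decide
        simp only [if_pos hα, if_neg hne]; ring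
      · by_cases hαi : t.get i = lαinv
        · simp only [if_pos hαi, if_neg hα]; ring
        · simp only [if_neg hα, if_neg hαi]; ring
    rw [Finset.sum_congr rfl (fun i _ => hterm i), Finset.sum_add_distrib,
      ← Finset.mul_sum, sum_indicator, ← ih]
    have h0 : (l :: t).get (0 : Fin (t.length + 1)) = l := rfl
    have ht0 : (l :: t).take ((0 : Fin (t.length + 1)) : ℕ) = [] := rfl
    rw [h0, ht0, bw_nil, cw, aw_cons, bw_cons]
    rcases l with ⟨x, s⟩
    cases x <;> cases s <;>
      simp [εa, εb, lα, lαinv, lβ, lβinv] <;> ring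

/-- for a word `g = l₁⋯l_n` in the letters `α, α⁻¹, β, β⁻¹` (0-indexed
here, so the prefix `w(0,i)` of letters preceding `l_i` is `w.take i`), the Heisenberg
invariant of `g` equals
`Σ_{i : l_i = α⁻¹} b(w(0,i)) − Σ_{j : l_j = α} b(w(0,j))`. -/
theorem statement_11 (w : Word) :
    νF (FreeGroup.mk w) =
      (∑ i ∈ Finset.univ.filter (fun i : Fin w.length => w.get i = lαinv),
        bw (w.take (i : ℕ))) -
      (∑ j ∈ Finset.univ.filter (fun j : Fin w.length => w.get j = lα),
        bw (w.take (j : ℕ))) := by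
  rw [νF_mk, core w, Finset.sum_filter, Finset.sum_filter, ← Finset.sum_sub_distrib]

end
end

section
/- Under the Magnus expansion homomorphism M : F → ℤ⟨⟨X,Y⟩⟩ determined by M(α) = 1 + X and M(β) = 1 + Y, for any g ∈ F the coefficient of X in M(g) equals a(g) and the coefficient of Y equals b(g); moreover if a(g) = b(g) = 0 then the degree-2 part of M(g) equals ν(g)(XY − YX). -/
/-! Common setup: free group on two generators, Heisenberg group of unipotent
upper-triangular 3×3 integer matrices, the Heisenberg invariant. -/

noncomputable section

open scoped commutatorElement

/-! The Magnus expansion. Since Mathlib does not have power series in non-commuting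
variables, we work in the quotient of the ring ℤ⟨X,Y⟩ of non-commutative polynomials by
the (two-sided) ideal generated by the monomials of degree 3; coefficients in degree ≤ 2
are unaffected by this truncation, and the group of units receives `1 + X` and `1 + Y`. -/

/-- The relation killing all degree-3 monomials in ℤ⟨X,Y⟩ = `FreeAlgebra ℤ Bool`. -/
def cubeRel : FreeAlgebra ℤ Bool → FreeAlgebra ℤ Bool → Prop := fun x y =>
  (∃ i j k : Bool, x = FreeAlgebra.ι ℤ i * FreeAlgebra.ι ℤ j * FreeAlgebra.ι ℤ k) ∧ y = 0

/-- The ring ℤ⟨X,Y⟩ truncated in degrees ≥ 3. -/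
abbrev TruncAlg : Type := RingQuot cubeRel

/-- The images of the generators. -/
def gen (i : Bool) : TruncAlg := RingQuot.mkRingHom cubeRel (FreeAlgebra.ι ℤ i)

/-- The variable `X` (corresponding to the generator `α`). -/
def XX : TruncAlg := gen false
/-- The variable `Y` (corresponding to the generator `β`). -/
def YY : TruncAlg := gen true

theorem cube_eq_zero (i j k : Bool) : gen i * gen j * gen k = 0 := by
  have h := RingQuot.mkRingHom_rel (r := cubeRel)
    (x := FreeAlgebra.ι ℤ i * FreeAlgebra.ι ℤ j * FreeAlgebra.ι ℤ k) (y := 0)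
    ⟨⟨i, j, k, rfl⟩, rfl⟩
  simpa [gen, map_mul] using h

/-- `1 + gen i` as a unit of the truncated algebra, with inverse `1 - gen i + (gen i)²`. -/
def oneAddGen (i : Bool) : TruncAlgˣ where
  val := 1 + gen i
  inv := 1 - gen i + gen i * gen i
  val_inv := by
    have h := cube_eq_zero i i i
    calc (1 + gen i) * (1 - gen i + gen i * gen i)
        = 1 + gen i * gen i * gen i := by
          rw [add_mul, one_mul, mul_add, mul_sub, mul_one, ← mul_assoc]; abel
      _ = 1 := by rw [h, add_zero]
  inv_val := by
    have h := cube_eq_zero i i i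
    calc (1 - gen i + gen i * gen i) * (1 + gen i)
        = 1 + gen i * gen i * gen i := by
          rw [mul_add, mul_one, add_mul, sub_mul, one_mul]; abel
      _ = 1 := by rw [h, add_zero]

/-- The Magnus expansion homomorphism `M : F → ℤ⟨⟨X,Y⟩⟩` (truncated in degrees ≥ 3),
determined by `M(α) = 1 + X` and `M(β) = 1 + Y`. -/
def Magnus : F →* TruncAlgˣ := FreeGroup.lift fun i => oneAddGen i


/-! Auxiliary lemmas for statement 19. -/

theorem of_pure (x : Bool) : (pure x : F) = FreeGroup.of x := rfl

def eA (u : (Matrix (Fin 3) (Fin 3) ℤ)ˣ) : ℤ := (u : Matrix (Fin 3) (Fin 3) ℤ) 0 1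
def eB (u : (Matrix (Fin 3) (Fin 3) ℤ)ˣ) : ℤ := (u : Matrix (Fin 3) (Fin 3) ℤ) 1 2
def eC (u : (Matrix (Fin 3) (Fin 3) ℤ)ˣ) : ℤ := (u : Matrix (Fin 3) (Fin 3) ℤ) 0 2

theorem eA_Munit (a b c : ℤ) : eA (Munit a b c) = a := by simp [eA, Munit, Mmat]
theorem eB_Munit (a b c : ℤ) : eB (Munit a b c) = b := by simp [eB, Munit, Mmat]
theorem eC_Munit (a b c : ℤ) : eC (Munit a b c) = c := by simp [eC, Munit, Mmat]

theorem aF_eq (g : F) : aF g = eA (Ψ g) := rfl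
theorem bF_eq (g : F) : bF g = eB (Ψ g) := rfl
theorem nuF_eq (g : F) : νF g = eC (Ψ g) - aF g * bF g := rfl

theorem psi_form (g : F) : Ψ g = Munit (aF g) (bF g) (aF g * bF g + νF g) := by
  obtain ⟨a, b, c, h⟩ := Ψ_mem g
  have ha : aF g = a := by rw [aF_eq, h, eA_Munit]
  have hb : bF g = b := by rw [bF_eq, h, eB_Munit]
  have hc : νF g = c - a * b := by rw [nuF_eq, h, eC_Munit, ha, hb]
  rw [h, ha, hb, hc]; exact Munit_congr rfl rfl (by ring)

theorem aF_mul (g h : F) : aF (g * h) = aF g + aF h := by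
  rw [aF_eq, map_mul, psi_form g, psi_form h, Munit_mul, eA_Munit]
theorem bF_mul (g h : F) : bF (g * h) = bF g + bF h := by
  rw [bF_eq, map_mul, psi_form g, psi_form h, Munit_mul, eB_Munit]
theorem nuF_mul (g h : F) : νF (g * h) = νF g + νF h - aF h * bF g := by
  rw [nuF_eq, map_mul, psi_form g, psi_form h, Munit_mul, eC_Munit, aF_mul, bF_mul]; ring

theorem aF_one : aF 1 = 0 := by rw [aF_eq, map_one, ← Munit_one, eA_Munit]
theorem bF_one : bF 1 = 0 := by rw [bF_eq, map_one, ← Munit_one, eB_Munit]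
theorem nuF_one : νF 1 = 0 := by rw [nuF_eq, map_one, ← Munit_one, eC_Munit, aF_one, bF_one]; ring

theorem aF_inv (g : F) : aF g⁻¹ = -aF g := by
  rw [aF_eq, map_inv, psi_form g, Munit_inv, eA_Munit]
theorem bF_inv (g : F) : bF g⁻¹ = -bF g := by
  rw [bF_eq, map_inv, psi_form g, Munit_inv, eB_Munit]
theorem nuF_inv (g : F) : νF g⁻¹ = -νF g - aF g * bF g := by
  rw [nuF_eq, map_inv, psi_form g, Munit_inv, eC_Munit, aF_inv, bF_inv]; ring

theorem aF_gen (x : Bool) : aF (FreeGroup.of x) = if x then 0 else 1 := by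
  have h : Ψ (FreeGroup.of x) = if x then Munit 0 1 0 else Munit 1 0 0 := by
    rw [Ψ, FreeGroup.lift_apply_of]
  cases x <;> simp_all [aF_eq, eA_Munit]
theorem bF_gen (x : Bool) : bF (FreeGroup.of x) = if x then 1 else 0 := by
  have h : Ψ (FreeGroup.of x) = if x then Munit 0 1 0 else Munit 1 0 0 := by
    rw [Ψ, FreeGroup.lift_apply_of]
  cases x <;> simp_all [bF_eq, eB_Munit]
theorem nuF_gen (x : Bool) : νF (FreeGroup.of x) = 0 := by
  have h : Ψ (FreeGroup.of x) = if x then Munit 0 1 0 else Munit 1 0 0 := by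
    rw [Ψ, FreeGroup.lift_apply_of]
  cases x <;> simp_all [nuF_eq, eC_Munit, aF_eq, eA_Munit, bF_eq, eB_Munit]

theorem cube2 (i j k : Bool) : gen i * (gen j * gen k) = 0 := by
  rw [← mul_assoc, cube_eq_zero]
theorem cube4 (i j k l : Bool) : gen i * gen j * (gen k * gen l) = 0 := by
  rw [mul_assoc, cube2, mul_zero]

/-- The generic truncated series. -/
def E (a b r p q s : ℤ) : TruncAlg :=
  1 + a • XX + b • YY + r • (XX * XX) + p • (XX * YY) + q • (YY * XX) + s • (YY * YY)

theorem Emul (a b r p q s a' b' r' p' q' s' : ℤ) :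
    E a b r p q s * E a' b' r' p' q' s' =
      E (a + a') (b + b') (r + r' + a * a') (p + p' + a * b') (q + q' + b * a')
        (s + s' + b * b') := by
  simp only [E, XX, YY, mul_add, add_mul, one_mul, mul_one, smul_mul_assoc, mul_smul_comm,
    smul_smul, cube_eq_zero, cube2, cube4, smul_zero, add_zero, zero_add]
  module

theorem magnus_gen (x : Bool) :
    ((Magnus (FreeGroup.of x) : TruncAlgˣ) : TruncAlg) =
      E (aF (FreeGroup.of x)) (bF (FreeGroup.of x)) 0 0 0 0 := by
  rw [Magnus, FreeGroup.lift_apply_of]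
  cases x <;> simp [oneAddGen, E, aF_gen, bF_gen, XX, YY]

theorem magnus_gen_inv (x : Bool) :
    ((Magnus (FreeGroup.of x)⁻¹ : TruncAlgˣ) : TruncAlg) =
      E (aF (FreeGroup.of x)⁻¹) (bF (FreeGroup.of x)⁻¹)
        (if x then 0 else 1) 0 0 (if x then 1 else 0) := by
  rw [map_inv, Magnus, FreeGroup.lift_apply_of]
  cases x <;>
    · simp [oneAddGen, E, aF_inv, bF_inv, aF_gen, bF_gen, XX, YY, Units.val_inv_eq_inv_val]
      module

theorem magnus_form (g : F) : ∃ r s : ℤ,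
    2 * r = aF g * (aF g - 1) ∧ 2 * s = bF g * (bF g - 1) ∧
    ((Magnus g : TruncAlgˣ) : TruncAlg) =
      E (aF g) (bF g) r (aF g * bF g + νF g) (-νF g) s := by
  induction g using FreeGroup.induction_on with
  | C1 =>
    exact ⟨0, 0, by simp [aF_one], by simp [bF_one], by
      simp [aF_one, bF_one, nuF_one, E, map_one]⟩
  | of x =>
    refine ⟨0, 0, ?_, ?_, ?_⟩
    · cases x <;> norm_num [of_pure, aF_gen]
    · cases x <;> norm_num [of_pure, bF_gen]
    · rw [magnus_gen, nuF_gen]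
      cases x <;> simp [aF_gen, bF_gen, E]
  | inv_of x _ =>
    refine ⟨if x then 0 else 1, if x then 1 else 0, ?_, ?_, ?_⟩
    · cases x <;> norm_num [of_pure, aF_inv, aF_gen]
    · cases x <;> norm_num [of_pure, bF_inv, bF_gen]
    · rw [magnus_gen_inv, nuF_inv, nuF_gen]
      cases x <;> norm_num [aF_gen, bF_gen, aF_inv, bF_inv, E]
  | mul g h hg hh =>
    obtain ⟨r, s, hr, hs, hE⟩ := hg
    obtain ⟨r', s', hr', hs', hE'⟩ := hh
    refine ⟨r + r' + aF g * aF h, s + s' + bF g * bF h, ?_, ?_, ?_⟩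
    · rw [aF_mul]; linarith [hr, hr']
    · rw [bF_mul]; linarith [hs, hs']
    · rw [map_mul, Units.val_mul, hE, hE', Emul, aF_mul, bF_mul, nuF_mul]
      congr 1 <;> ring

/-- under the Magnus expansion `M` (with `M(α) = 1 + X`, `M(β) = 1 + Y`,
computed in ℤ⟨X,Y⟩ truncated in degrees ≥ 3, which does not affect coefficients in
degrees ≤ 2), for any `g ∈ F` the coefficient of `X` is `a(g)` and the coefficient of
`Y` is `b(g)`, i.e. `M(g) − 1 − a(g)X − b(g)Y` is a ℤ-combination of the degree-2
monomials; and if `a(g) = b(g) = 0` then the degree-2 part is `ν(g)(XY − YX)`, i.e.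
`M(g) = 1 + ν(g)(XY − YX)`. -/
theorem statement_19 (g : F) :
    ((Magnus g : TruncAlgˣ) : TruncAlg) - 1 - aF g • XX - bF g • YY ∈
      Submodule.span ℤ ({XX * XX, XX * YY, YY * XX, YY * YY} : Set TruncAlg) ∧
    (aF g = 0 → bF g = 0 →
      ((Magnus g : TruncAlgˣ) : TruncAlg) = 1 + νF g • (XX * YY - YY * XX)) := by
  obtain ⟨r, s, hr, hs, hE⟩ := magnus_form g
  constructor
  · rw [hE]
    have : E (aF g) (bF g) r (aF g * bF g + νF g) (-νF g) s - 1 - aF g • XX - bF g • YY =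
        r • (XX * XX) + (aF g * bF g + νF g) • (XX * YY) + (-νF g) • (YY * XX) +
          s • (YY * YY) := by
      simp only [E]; abel
    rw [this]
    refine Submodule.add_mem _ (Submodule.add_mem _ (Submodule.add_mem _ ?_ ?_) ?_) ?_ <;>
      exact Submodule.smul_mem _ _ (Submodule.subset_span (by simp))
  · intro ha hb
    have hr0 : r = 0 := by rw [ha] at hr; omega
    have hs0 : s = 0 := by rw [hb] at hs; omega
    rw [hE, ha, hb, hr0, hs0]
    simp only [E, zero_smul, add_zero, zero_add, zero_mul, smul_sub]
    module


end
end
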